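/- Let d ≥ 1, t ≥ 1 a real number, b ∈ ℝ^d, and let V ⊆ {−1, 1}^d be a nonempty finite set with |V| ≥ 2^d / t. Then (1/|V|) · Σ_{v ∈ V} | Σ_{i=1}^d v_i b_i | ≤ √2 · (2 + √(ln t)) · ‖b‖₂, where ‖b‖₂ = (Σ_i b_i²)^{1/2}. -/

import Mathlib

set_option maxHeartbeats 1000000

lemma mgf_bound (d : ℕ) (b : Fin d → ℝ) (c : ℝ) (V : Finset (Fin d → ℝ))
    (hVpm : ∀ v ∈ V, ∀ i, v i = 1 ∨ v i = -1) :
    ∑ v ∈ V, Real.exp (c * ∑ i, v i * b i) ≤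
      2 ^ d * Real.exp (c ^ 2 * (∑ i, (b i) ^ 2) / 2) := by
  have hsub : V ⊆ Fintype.piFinset (fun _ : Fin d => ({1, -1} : Finset ℝ)) := by
    intro v hv
    rw [Fintype.mem_piFinset]
    intro i
    rcases hVpm v hv i with h | h <;> simp [h]
  calc ∑ v ∈ V, Real.exp (c * ∑ i, v i * b i)
      ≤ ∑ v ∈ Fintype.piFinset (fun _ : Fin d => ({1, -1} : Finset ℝ)),
          Real.exp (c * ∑ i, v i * b i) :=
        Finset.sum_le_sum_of_subset_of_nonneg hsub (fun _ _ _ => (Real.exp_pos _).le)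
    _ = ∏ i, ∑ x ∈ ({1, -1} : Finset ℝ), Real.exp (c * (x * b i)) := by
        rw [Finset.prod_univ_sum]
        refine Finset.sum_congr rfl fun v _ => ?_
        rw [← Real.exp_sum, Finset.mul_sum]
    _ ≤ ∏ i, 2 * Real.exp (c ^ 2 * (b i) ^ 2 / 2) := by
        refine Finset.prod_le_prod (fun i _ => ?_) (fun i _ => ?_)
        · exact Finset.sum_nonneg fun x _ => (Real.exp_pos _).le
        · have := Real.cosh_le_exp_half_sq (c * b i)
          rw [Real.cosh_eq] at this
          have h2 : ∑ x ∈ ({1, -1} : Finset ℝ), Real.exp (c * (x * b i))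
              = Real.exp (c * b i) + Real.exp (-(c * b i)) := by
            rw [Finset.sum_pair (by norm_num : (1 : ℝ) ≠ -1)]
            ring_nf
          rw [h2]
          have h3 : c ^ 2 * b i ^ 2 / 2 = (c * b i) ^ 2 / 2 := by ring
          rw [h3]
          linarith
    _ = 2 ^ d * Real.exp (c ^ 2 * (∑ i, (b i) ^ 2) / 2) := by
        rw [Finset.prod_mul_distrib, Finset.prod_const, ← Real.exp_sum]
        congr 1
        · simp
        · rw [← Finset.sum_div, ← Finset.mul_sum]

lemma abs_le_exp_aux (x s c : ℝ) (hc : 0 < c) :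
    |x| ≤ s + (Real.exp (c * (x - s) - 1) + Real.exp (c * (-x - s) - 1)) / c := by
  have hA := Real.add_one_le_exp (c * (x - s) - 1)
  have hB := Real.add_one_le_exp (c * (-x - s) - 1)
  have hA' := (Real.exp_pos (c * (x - s) - 1)).le
  have hB' := (Real.exp_pos (c * (-x - s) - 1)).le
  rw [← sub_le_iff_le_add', le_div_iff₀ hc]
  rcases abs_cases x with ⟨h1, _⟩ | ⟨h1, _⟩ <;> nlinarith

/-- Averaging bound over large subsets of the Boolean hypercube. -/
theorem stmt_6 (d : ℕ) (hd : 1 ≤ d) (t : ℝ) (ht : 1 ≤ t) (b : Fin d → ℝ)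
    (V : Finset (Fin d → ℝ))
    (hVpm : ∀ v ∈ V, ∀ i, v i = 1 ∨ v i = -1)
    (hVne : V.Nonempty)
    (hVcard : (2 : ℝ) ^ d / t ≤ V.card) :
    (1 / (V.card : ℝ)) * ∑ v ∈ V, |∑ i, v i * b i| ≤
      Real.sqrt 2 * (2 + Real.sqrt (Real.log t)) * Real.sqrt (∑ i, (b i) ^ 2) := by
  obtain ⟨S, hS⟩ : ∃ S : ℝ, S = ∑ i, (b i) ^ 2 := ⟨_, rfl⟩
  rw [← hS]
  have hSnn : 0 ≤ S := hS ▸ Finset.sum_nonneg fun i _ => sq_nonneg _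
  by_cases hS0 : S = 0
  · have hb : ∀ i, b i = 0 := by
      intro i
      have h2 := (Finset.sum_eq_zero_iff_of_nonneg
        (fun i (_ : i ∈ Finset.univ) => sq_nonneg (b i))).mp (hS ▸ hS0) i (Finset.mem_univ i)
      exact pow_eq_zero_iff (two_ne_zero) |>.mp h2
    have hz : ∀ v ∈ V, |∑ i, v i * b i| = 0 := by
      intro v _; simp [hb]
    rw [Finset.sum_congr rfl hz]
    simp only [Finset.sum_const, smul_zero, mul_zero]
    have : (0:ℝ) ≤ Real.sqrt 2 * (2 + Real.sqrt (Real.log t)) * Real.sqrt S := by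
      have := Real.sqrt_nonneg (Real.log t)
      have := Real.sqrt_nonneg S
      have := Real.sqrt_nonneg 2
      positivity
    linarith
  · have hSpos : 0 < S := lt_of_le_of_ne hSnn (Ne.symm hS0)
    have ht0 : (0 : ℝ) < t := lt_of_lt_of_le one_pos ht
    obtain ⟨L, hLdef⟩ : ∃ L : ℝ, L = Real.log t := ⟨_, rfl⟩
    rw [← hLdef]
    have hL : 0 ≤ L := hLdef ▸ Real.log_nonneg ht
    obtain ⟨s, hsdef⟩ : ∃ s : ℝ, s = Real.sqrt (2 * S * (L + 1)) := ⟨_, rfl⟩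
    have hspos : 0 < s := hsdef ▸ Real.sqrt_pos.mpr (by positivity)
    have hs2 : s ^ 2 = 2 * S * (L + 1) := hsdef ▸ Real.sq_sqrt (by positivity)
    obtain ⟨c, hcdef⟩ : ∃ c : ℝ, c = s / S := ⟨_, rfl⟩
    have hc : 0 < c := hcdef ▸ div_pos hspos hSpos
    obtain ⟨N, hNdef⟩ : ∃ N : ℝ, N = (V.card : ℝ) := ⟨_, rfl⟩
    rw [← hNdef]
    have hN : 0 < N := by
      have h := Finset.card_pos.mpr hVne
      rw [hNdef]
      exact_mod_cast h
    have h2d : (2 : ℝ) ^ d ≤ t * N := by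
      rw [div_le_iff₀ ht0, ← hNdef] at hVcard
      linarith
    obtain ⟨E, hEdef⟩ : ∃ E : ℝ, E = Real.exp (c ^ 2 * S / 2 - c * s - 1) := ⟨_, rfl⟩
    have hEpos : 0 < E := hEdef ▸ Real.exp_pos _
    have keyA : ∑ v ∈ V, Real.exp (c * ((∑ i, v i * b i) - s) - 1) ≤ 2 ^ d * E := by
      have h1 : ∀ v : Fin d → ℝ, Real.exp (c * ((∑ i, v i * b i) - s) - 1)
          = Real.exp (c * ∑ i, v i * b i) * Real.exp (-(c * s) - 1) := fun v => by
        rw [← Real.exp_add]; congr 1; ring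
      simp only [h1, ← Finset.sum_mul]
      calc (∑ v ∈ V, Real.exp (c * ∑ i, v i * b i)) * Real.exp (-(c * s) - 1)
          ≤ (2 ^ d * Real.exp (c ^ 2 * S / 2)) * Real.exp (-(c * s) - 1) := by
            apply mul_le_mul_of_nonneg_right _ (Real.exp_pos _).le
            rw [hS]
            exact mgf_bound d b c V hVpm
        _ = 2 ^ d * E := by rw [mul_assoc, ← Real.exp_add, hEdef]; congr 2; ring
    have keyB : ∑ v ∈ V, Real.exp (c * (-(∑ i, v i * b i) - s) - 1) ≤ 2 ^ d * E := by
      have h1 : ∀ v : Fin d → ℝ, Real.exp (c * (-(∑ i, v i * b i) - s) - 1)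
          = Real.exp ((-c) * ∑ i, v i * b i) * Real.exp (-(c * s) - 1) := fun v => by
        rw [← Real.exp_add]; congr 1; ring
      simp only [h1, ← Finset.sum_mul]
      calc (∑ v ∈ V, Real.exp ((-c) * ∑ i, v i * b i)) * Real.exp (-(c * s) - 1)
          ≤ (2 ^ d * Real.exp ((-c) ^ 2 * S / 2)) * Real.exp (-(c * s) - 1) := by
            apply mul_le_mul_of_nonneg_right _ (Real.exp_pos _).le
            rw [hS]
            exact mgf_bound d b (-c) V hVpm
        _ = 2 ^ d * E := by rw [mul_assoc, ← Real.exp_add, hEdef]; congr 2; ring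
    have key : ∑ v ∈ V, |∑ i, v i * b i| ≤ N * s + (2 ^ d * E + 2 ^ d * E) / c := by
      calc ∑ v ∈ V, |∑ i, v i * b i|
          ≤ ∑ v ∈ V, (s + (Real.exp (c * ((∑ i, v i * b i) - s) - 1)
              + Real.exp (c * (-(∑ i, v i * b i) - s) - 1)) / c) :=
            Finset.sum_le_sum fun v _ => abs_le_exp_aux _ s c hc
        _ = N * s + (∑ v ∈ V, Real.exp (c * ((∑ i, v i * b i) - s) - 1)
              + ∑ v ∈ V, Real.exp (c * (-(∑ i, v i * b i) - s) - 1)) / c := by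
            rw [Finset.sum_add_distrib, Finset.sum_const, nsmul_eq_mul,
              ← Finset.sum_div, Finset.sum_add_distrib, hNdef]
        _ ≤ N * s + (2 ^ d * E + 2 ^ d * E) / c := by
            gcongr
    -- compute E
    have hcs : c * s = 2 * (L + 1) := by
      rw [hcdef, div_mul_eq_mul_div, div_eq_iff (ne_of_gt hSpos)]
      linear_combination hs2
    have hc2 : c ^ 2 * S = 2 * (L + 1) := by
      rw [hcdef, div_pow, div_mul_eq_mul_div, div_eq_iff (by positivity : S ^ 2 ≠ 0)]
      linear_combination S * hs2
    have hexpval : c ^ 2 * S / 2 - c * s - 1 = -L - 2 := by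
      rw [hc2, hcs]; ring
    have hEval : E = Real.exp (-L) * Real.exp (-2) := by
      have hr : -L - 2 = -L + -2 := by ring
      rw [hEdef, hexpval, hr, Real.exp_add]
    have hexpL : t * Real.exp (-L) = 1 := by
      rw [hLdef, Real.exp_neg, Real.exp_log ht0]
      field_simp
    -- main chain
    have step : (1 / N) * ∑ v ∈ V, |∑ i, v i * b i| ≤ s + 2 * S * Real.exp (-2) / s := by
      have h1 : (1 / N) * ∑ v ∈ V, |∑ i, v i * b i|
          ≤ (1 / N) * (N * s + (2 ^ d * E + 2 ^ d * E) / c) :=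
        mul_le_mul_of_nonneg_left key (by positivity)
      have h2 : (1 / N) * (N * s + (2 ^ d * E + 2 ^ d * E) / c)
          = s + (2 * 2 ^ d * E) / (c * N) := by
        field_simp
        ring
      have h3 : (2 * 2 ^ d * E) / (c * N) ≤ 2 * S * Real.exp (-2) / s := by
        rw [hEval]
        rw [div_le_div_iff₀ (by positivity) hspos]
        have hh : (2:ℝ) ^ d * Real.exp (-L) ≤ N := by
          calc (2:ℝ) ^ d * Real.exp (-L) ≤ t * N * Real.exp (-L) :=
                mul_le_mul_of_nonneg_right h2d (Real.exp_pos (-L)).le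
            _ = N * (t * Real.exp (-L)) := by ring
            _ = N := by rw [hexpL]; ring
        calc 2 * 2 ^ d * (Real.exp (-L) * Real.exp (-2)) * s
            = (2 ^ d * Real.exp (-L)) * (2 * Real.exp (-2) * s) := by ring
          _ ≤ N * (2 * Real.exp (-2) * s) :=
              mul_le_mul_of_nonneg_right hh (by positivity)
          _ = 2 * S * Real.exp (-2) * (c * N) := by
              rw [hcdef]; field_simp
      linarith
    -- final numeric inequality
    obtain ⟨σ, hσdef⟩ : ∃ σ : ℝ, σ = Real.sqrt S := ⟨_, rfl⟩
    rw [← hσdef]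
    have hσpos : 0 < σ := hσdef ▸ Real.sqrt_pos.mpr hSpos
    have hσ2 : σ ^ 2 = S := hσdef ▸ Real.sq_sqrt hSnn
    have hs_eq : s = Real.sqrt 2 * σ * Real.sqrt (L + 1) := by
      rw [hsdef, hσdef, Real.sqrt_mul (by positivity), Real.sqrt_mul (by norm_num)]
    have hsqL : Real.sqrt (L + 1) ≤ Real.sqrt L + 1 := by
      have h1 : L + 1 ≤ (Real.sqrt L + 1) ^ 2 := by
        nlinarith [Real.sq_sqrt hL, Real.sqrt_nonneg L]
      have h2 := Real.sqrt_le_sqrt h1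
      rwa [Real.sqrt_sq (by positivity)] at h2
    have hsq1 : 1 ≤ Real.sqrt (L + 1) := by
      have h2 := Real.sqrt_le_sqrt (show (1:ℝ) ≤ L + 1 by linarith)
      rwa [Real.sqrt_one] at h2
    have hexp2 : Real.exp (-2) ≤ 1 := by
      rw [Real.exp_le_one_iff]; norm_num
    have h1 : s ≤ Real.sqrt 2 * σ * Real.sqrt L + Real.sqrt 2 * σ := by
      rw [hs_eq]
      have h := mul_le_mul_of_nonneg_left hsqL
        (show (0:ℝ) ≤ Real.sqrt 2 * σ by positivity)
      nlinarith [h]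
    have h2 : 2 * S * Real.exp (-2) / s ≤ Real.sqrt 2 * σ := by
      rw [div_le_iff₀ hspos, hs_eq]
      have h22 : Real.sqrt 2 * Real.sqrt 2 = 2 := Real.mul_self_sqrt (by norm_num)
      have hre : Real.sqrt 2 * σ * (Real.sqrt 2 * σ * Real.sqrt (L + 1))
          = 2 * S * Real.sqrt (L + 1) := by
        rw [← hσ2]
        calc Real.sqrt 2 * σ * (Real.sqrt 2 * σ * Real.sqrt (L + 1))
            = (Real.sqrt 2 * Real.sqrt 2) * (σ ^ 2 * Real.sqrt (L + 1)) := by ring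
          _ = 2 * σ ^ 2 * Real.sqrt (L + 1) := by rw [h22]; ring
      rw [hre]
      have hmono := mul_le_mul_of_nonneg_left (le_trans hexp2 hsq1) hSpos.le
      linarith
    calc (1 / N) * ∑ v ∈ V, |∑ i, v i * b i| ≤ s + 2 * S * Real.exp (-2) / s := step
      _ ≤ Real.sqrt 2 * (2 + Real.sqrt L) * σ := by nlinarith [Real.sqrt_nonneg 2, Real.sqrt_nonneg L]
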